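/- The sequence defined by Δ̂_{S_1} = Δ_c + λ_e/λ and Δ̂_{S_{ℓ+1}} = ( (λ_e/λ)/(k−ℓ) + Δ_c/k + (ℓ/(k−1)) Δ̂_{S_ℓ} ) / (1/k + ℓ/(k−1)) for 1 ≤ ℓ ≤ k−1 satisfies Δ̂_{S_k} ≤ Δ_c + (λ_e/λ)·H_k, where H_k = Σ_{ℓ=1}^k 1/ℓ. -/

import Mathlib

lemma key_ineq (K L S a d : ℝ) (hK : 2 ≤ K) (hL : 1 ≤ L) (hLK : L + 1 ≤ K)
    (ha : 0 < a) (hd : 0 ≤ d) (hS0 : 0 ≤ S) (hS : S ≤ L / (K - L)) :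
    a / (K - L) + d / K + (L / (K - 1)) * (d + a * (K / L) * S)
      ≤ (d + a * (K / (L + 1)) * (S + 1 / (K - L))) * (1 / K + L / (K - 1)) := by
  have hK0 : (0:ℝ) < K := by linarith
  have hL0 : (0:ℝ) < L := by linarith
  have hkl : (0:ℝ) < K - L := by linarith
  have hk1 : (0:ℝ) < K - 1 := by linarith
  have hL10 : (0:ℝ) < L + 1 := by linarith
  have hid : (d + a * (K / (L + 1)) * (S + 1 / (K - L))) * (1 / K + L / (K - 1))
      - (a / (K - L) + d / K + (L / (K - 1)) * (d + a * (K / L) * S))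
      = a * (L / (K - L) - S) / ((L + 1) * (K - 1)) := by
    field_simp
    ring
  have hpos : 0 ≤ a * (L / (K - L) - S) / ((L + 1) * (K - 1)) := by
    apply div_nonneg
    · exact mul_nonneg ha.le (by linarith)
    · positivity
  linarith


/-- The reversed-index recursion for the fully connected cluster with `λc = λ`:
`Δ̂_1 = Δc + λe/λ`, `Δ̂_{ℓ+1} = ((λe/λ)/(k−ℓ) + Δc/k + (ℓ/(k−1))Δ̂_ℓ)/(1/k + ℓ/(k−1))`
for `1 ≤ ℓ ≤ k−1`, satisfies `Δ̂_k ≤ Δc + (λe/λ)·H_k`. -/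
theorem stmt_12 (k : ℕ) (hk : 2 ≤ k) (lamE lam Δc : ℝ)
    (hE : 0 < lamE) (hl : 0 < lam) (hΔc : 0 ≤ Δc)
    (Δhat : ℕ → ℝ)
    (h1 : Δhat 1 = Δc + lamE / lam)
    (hrec : ∀ l, 1 ≤ l → l ≤ k - 1 →
      Δhat (l + 1) = ((lamE / lam) / ((k : ℝ) - l) + Δc / k
          + ((l : ℝ) / ((k : ℝ) - 1)) * Δhat l)
        / (1 / (k : ℝ) + (l : ℝ) / ((k : ℝ) - 1))) :
    Δhat k ≤ Δc + (lamE / lam) * ∑ l ∈ Finset.Icc 1 k, (1 : ℝ) / l := by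
  have hK2 : (2:ℝ) ≤ (k:ℝ) := by exact_mod_cast hk
  have hK0 : (0:ℝ) < (k:ℝ) := by linarith
  set a := lamE / lam with ha_def
  have ha : 0 < a := div_pos hE hl
  set S : ℕ → ℝ := fun l => ∑ j ∈ Finset.Icc (k - l + 1) k, (1:ℝ)/j with hS_def
  have hS1 : S 1 = 1/(k:ℝ) := by
    have h : k - 1 + 1 = k := by omega
    simp [hS_def, h]
  have hSrec : ∀ l : ℕ, 1 ≤ l → l + 1 ≤ k → S (l+1) = S l + 1/((k:ℝ) - l) := by
    intro l h1l h2l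
    have he : k - (l+1) + 1 = k - l := by omega
    have hins : Finset.Icc (k - l) k = insert (k - l) (Finset.Icc (k - l + 1) k) := by
      ext x; simp only [Finset.mem_Icc, Finset.mem_insert]; omega
    have hnot : k - l ∉ Finset.Icc (k - l + 1) k := by
      simp only [Finset.mem_Icc]; omega
    have hcast : ((k - l : ℕ) : ℝ) = (k:ℝ) - l := by
      have : l ≤ k := by omega
      push_cast [this]; ring
    simp only [hS_def, he, hins, Finset.sum_insert hnot, hcast]
    ring
  have hSnonneg : ∀ l : ℕ, 0 ≤ S l := by
    intro l; apply Finset.sum_nonneg; intro j hj; positivity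
  have hSbound : ∀ l : ℕ, 1 ≤ l → l + 1 ≤ k → S l ≤ (l:ℝ)/((k:ℝ) - l) := by
    intro l h1l h2l
    have hkl : (0:ℝ) < (k:ℝ) - l := by
      have : (l:ℝ) + 1 ≤ (k:ℝ) := by exact_mod_cast h2l
      linarith
    have hcard : (Finset.Icc (k - l + 1) k).card = l := by
      rw [Nat.card_Icc]; omega
    calc S l ≤ ∑ j ∈ Finset.Icc (k - l + 1) k, 1/((k:ℝ) - l) := by
          apply Finset.sum_le_sum
          intro j hj
          simp only [Finset.mem_Icc] at hj
          have : (k:ℝ) - l ≤ (j:ℝ) := by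
            have h3 : k - l + 1 ≤ j := hj.1
            have h4 : k - l + 1 ≤ j → ((k - l : ℕ):ℝ) + 1 ≤ (j:ℝ) := by
              intro h; exact_mod_cast Nat.succ_le_of_lt (Nat.lt_of_succ_le h)
            have h5 := h4 h3
            have h6 : ((k - l : ℕ):ℝ) = (k:ℝ) - l := by
              have : l ≤ k := by omega
              push_cast [this]; ring
            linarith [h6 ▸ h5]
          exact one_div_le_one_div_of_le hkl this
      _ = (l:ℝ)/((k:ℝ) - l) := by
          rw [Finset.sum_const, hcard, nsmul_eq_mul]; ring
  have aux : ∀ l : ℕ, 1 ≤ l → l ≤ k → Δhat l ≤ Δc + a * ((k:ℝ)/l) * S l := by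
    intro l h1l
    induction l, h1l using Nat.le_induction with
    | base =>
      intro _
      rw [h1, hS1]
      have : (k:ℝ) ≠ 0 := ne_of_gt hK0
      field_simp
      push_cast; linarith
    | succ l hl IH =>
      intro hlk
      have hlk' : l ≤ k - 1 := by omega
      have hlk2 : l + 1 ≤ k := hlk
      have IH' := IH (by omega)
      rw [hrec l hl hlk']
      have hL1 : (1:ℝ) ≤ (l:ℝ) := by exact_mod_cast hl
      have hLK : (l:ℝ) + 1 ≤ (k:ℝ) := by exact_mod_cast hlk2
      have hkl : (0:ℝ) < (k:ℝ) - l := by linarith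
      have hk1 : (0:ℝ) < (k:ℝ) - 1 := by linarith
      have hD : (0:ℝ) < 1 / (k:ℝ) + (l:ℝ) / ((k:ℝ) - 1) := by positivity
      have hS := hSbound l hl hlk2
      have hS0 := hSnonneg l
      have step1 : (a / ((k : ℝ) - l) + Δc / k + ((l : ℝ) / ((k : ℝ) - 1)) * Δhat l)
            / (1 / (k : ℝ) + (l : ℝ) / ((k : ℝ) - 1))
          ≤ (a / ((k : ℝ) - l) + Δc / k
              + ((l : ℝ) / ((k : ℝ) - 1)) * (Δc + a * ((k:ℝ)/l) * S l))
            / (1 / (k : ℝ) + (l : ℝ) / ((k : ℝ) - 1)) := by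
        gcongr
      have step2 : (a / ((k : ℝ) - l) + Δc / k
              + ((l : ℝ) / ((k : ℝ) - 1)) * (Δc + a * ((k:ℝ)/l) * S l))
            / (1 / (k : ℝ) + (l : ℝ) / ((k : ℝ) - 1))
          ≤ Δc + a * ((k:ℝ)/((l:ℝ)+1)) * (S l + 1/((k:ℝ) - l)) := by
        rw [div_le_iff₀ hD]
        exact key_ineq (k:ℝ) (l:ℝ) (S l) a Δc hK2 hL1 hLK ha hΔc hS0 hS
      have hcast : ((l+1 : ℕ):ℝ) = (l:ℝ) + 1 := by push_cast; ring
      calc _ ≤ _ := step1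
        _ ≤ Δc + a * ((k:ℝ)/((l:ℝ)+1)) * (S l + 1/((k:ℝ) - l)) := step2
        _ = Δc + a * ((k:ℝ)/((l+1:ℕ):ℝ)) * S (l+1) := by
            rw [hSrec l hl hlk2, hcast]
  have hfin := aux k (by omega) le_rfl
  have hSk : S k = ∑ l ∈ Finset.Icc 1 k, (1 : ℝ) / l := by
    have : k - k + 1 = 1 := by omega
    simp [hS_def, this]
  have : (k:ℝ)/(k:ℝ) = 1 := div_self (ne_of_gt hK0)
  rw [hSk, this] at hfin
  linarith [hfin]
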